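/- The store-delta widened transfer function is a complete abstraction of the timestamped widened transfer function: let ↦_ξ be any delta presentation of ↦, let D denote the delta-based transfer function built from ↦_ξ, and let T denote the timestamped transfer function built from ↦. Then for every initial context c₀ and every n ∈ ℕ, Dⁿ(({(c₀,0)}, {c₀}, ⊥, [⊥], 0)) = Tⁿ(({(c₀,0)}, {c₀}, ⊥, [⊥], 0)); in particular D is well defined (its result does not depend on the order in which the logs are concatenated). -/
import Mathlib


open Classical

/-- A store maps addresses to sets of values, ordered pointwise. -/
abbrev Store (Addr Value : Type*) := Addr → Set Value

/-- Replaying a store-delta log. -/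
def replay {Addr Value : Type*} (ξ : List (Addr × Set Value)) (σ : Store Addr Value) :
    Store Addr Value × Prop :=
  (fun a => σ a ∪ ⋃ vs ∈ {vs | (a, vs) ∈ ξ}, vs, ∃ p ∈ ξ, ¬ p.2 ⊆ σ p.1)

/-- The timestamped widened transfer function `T`, built from `↦`. -/
noncomputable def Tstep {Addr Value Context : Type*}
    (step : Context × Store Addr Value → Context × Store Addr Value → Prop)
    (cfg : Set (Context × ℕ) × Set Context × Store Addr Value × List (Store Addr Value) × ℕ) :
    Set (Context × ℕ) × Set Context × Store Addr Value × List (Store Addr Value) × ℕ :=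
  let Shat := cfg.1
  let F := cfg.2.1
  let σ := cfg.2.2.1
  let Sg := cfg.2.2.2.1
  let t := cfg.2.2.2.2
  let I : Set (Context × Store Addr Value) := {p | ∃ c ∈ F, step (c, σ) p}
  let σ' : Store Addr Value := fun a => σ a ∪ ⋃ p ∈ I, p.2 a
  let t' : ℕ := if σ' = σ then t else t + 1
  let Sg' : List (Store Addr Value) := if σ' = σ then Sg else σ' :: Sg
  let F' : Set Context := {c' | (∃ σc, (c', σc) ∈ I) ∧ (c', t') ∉ Shat}
  (Shat ∪ {p | p.1 ∈ F' ∧ p.2 = t'}, F', σ', Sg', t')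

/-- The delta-based widened transfer function `D`, built from a delta presentation
`↦_ξ`: the new store and the change flag are obtained by replaying (the concatenation,
in any order, of) all logs produced in the step, which by order-independence of `replay`
amounts to joining all logged entries into `σ` and checking whether any logged entry was
not already contained in `σ`. -/
noncomputable def Dstep {Addr Value Context : Type*}
    (dstep : Context × Store Addr Value → Context × List (Addr × Set Value) → Prop)
    (cfg : Set (Context × ℕ) × Set Context × Store Addr Value × List (Store Addr Value) × ℕ) :
    Set (Context × ℕ) × Set Context × Store Addr Value × List (Store Addr Value) × ℕ :=
  let Shat := cfg.1
  let F := cfg.2.1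
  let σ := cfg.2.2.1
  let Sg := cfg.2.2.2.1
  let t := cfg.2.2.2.2
  let I : Set (Context × List (Addr × Set Value)) := {p | ∃ c ∈ F, dstep (c, σ) p}
  let σ' : Store Addr Value := fun a => σ a ∪ ⋃ vs ∈ {vs | ∃ p ∈ I, (a, vs) ∈ p.2}, vs
  let changed : Prop := ∃ p ∈ I, ∃ q ∈ p.2, ¬ q.2 ⊆ σ q.1
  let t' : ℕ := if changed then t + 1 else t
  let Sg' : List (Store Addr Value) := if changed then σ' :: Sg else Sg
  let F' : Set Context := {c' | (∃ ξ, (c', ξ) ∈ I) ∧ (c', t') ∉ Shat}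
  (Shat ∪ {p | p.1 ∈ F' ∧ p.2 = t'}, F', σ', Sg', t')

/-- The store-delta widened transfer function is a complete abstraction of
the timestamped widened transfer function: for any delta presentation `↦_ξ` of `↦`,
every iterate of `D` from the initial configuration equals the corresponding iterate of
`T`. -/
theorem stmt_7 {Addr Value Context : Type*}
    (step : Context × Store Addr Value → Context × Store Addr Value → Prop)
    (hext : ∀ c σ c' σ', step (c, σ) (c', σ') → σ ≤ σ')
    (dstep : Context × Store Addr Value → Context × List (Addr × Set Value) → Prop)
    (hsound : ∀ c σ c' ξ, dstep (c, σ) (c', ξ) → step (c, σ) (c', (replay ξ σ).1))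
    (hcomplete : ∀ c σ c' σ', step (c, σ) (c', σ') →
      ∃ ξ, dstep (c, σ) (c', ξ) ∧ (replay ξ σ).1 = σ')
    (c₀ : Context) :
    ∀ n : ℕ,
      (Dstep dstep)^[n] ({(c₀, 0)}, {c₀}, (fun _ => ∅), [fun _ => ∅], 0) =
        (Tstep step)^[n] ({(c₀, 0)}, {c₀}, (fun _ => ∅), [fun _ => ∅], 0) := by
  have key : Dstep dstep = Tstep step := by
    funext cfg
    obtain ⟨Shat, F, σ, Sg, t⟩ := cfg
    simp only [Dstep, Tstep]
    set IT : Set (Context × Store Addr Value) := {p | ∃ c ∈ F, step (c, σ) p} with hIT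
    set ID : Set (Context × List (Addr × Set Value)) := {p | ∃ c ∈ F, dstep (c, σ) p} with hID
    have hσ : (fun a => σ a ∪ ⋃ vs ∈ {vs | ∃ p ∈ ID, (a, vs) ∈ p.2}, vs)
        = (fun a => σ a ∪ ⋃ p ∈ IT, p.2 a) := by
      funext a
      ext v
      simp only [Set.mem_union, Set.mem_iUnion, exists_prop, Set.mem_setOf_eq]
      constructor
      · rintro (hv | ⟨vs, ⟨⟨c', ξ⟩, ⟨c, hc, hd⟩, hmem⟩, hvvs⟩)
        · exact Or.inl hv
        · refine Or.inr ⟨(c', (replay ξ σ).1), ⟨c, hc, hsound _ _ _ _ hd⟩, ?_⟩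
          simp only [replay, Set.mem_union, Set.mem_iUnion, exists_prop, Set.mem_setOf_eq]
          exact Or.inr ⟨vs, hmem, hvvs⟩
      · rintro (hv | ⟨⟨c', σc⟩, ⟨c, hc, hs⟩, hv⟩)
        · exact Or.inl hv
        · obtain ⟨ξ, hd, hr⟩ := hcomplete _ _ _ _ hs
          rw [← hr] at hv
          simp only [replay, Set.mem_union, Set.mem_iUnion, exists_prop,
            Set.mem_setOf_eq] at hv
          rcases hv with hv | ⟨vs, hmem, hvvs⟩
          · exact Or.inl hv
          · exact Or.inr ⟨vs, ⟨(c', ξ), ⟨c, hc, hd⟩, hmem⟩, hvvs⟩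
    have hch : (∃ p ∈ ID, ∃ q ∈ p.2, ¬ q.2 ⊆ σ q.1)
        ↔ ¬ (fun a => σ a ∪ ⋃ vs ∈ {vs | ∃ p ∈ ID, (a, vs) ∈ p.2}, vs) = σ := by
      constructor
      · rintro ⟨p, hp, ⟨aq, vs⟩, hq, hns⟩ heq
        apply hns
        intro v hv
        have hmem : v ∈ σ aq ∪ ⋃ vs ∈ {vs | ∃ p ∈ ID, (aq, vs) ∈ p.2}, vs := by
          right
          simp only [Set.mem_iUnion, exists_prop, Set.mem_setOf_eq]
          exact ⟨vs, ⟨p, hp, hq⟩, hv⟩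
        rw [congrFun heq aq] at hmem
        exact hmem
      · intro h
        by_contra hnc
        push_neg at hnc
        apply h
        funext a
        rw [Set.union_eq_left]
        intro v hv
        simp only [Set.mem_iUnion, exists_prop, Set.mem_setOf_eq] at hv
        obtain ⟨vs, ⟨p, hp, hq⟩, hvvs⟩ := hv
        exact hnc p hp (a, vs) hq hvvs
    have hF : ∀ c' : Context, (∃ ξ, (c', ξ) ∈ ID) ↔ (∃ σc, (c', σc) ∈ IT) := by
      intro c'
      constructor
      · rintro ⟨ξ, c, hc, hd⟩
        exact ⟨(replay ξ σ).1, c, hc, hsound _ _ _ _ hd⟩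
      · rintro ⟨σc, c, hc, hs⟩
        obtain ⟨ξ, hd, _⟩ := hcomplete _ _ _ _ hs
        exact ⟨ξ, c, hc, hd⟩
    rw [hσ]
    rw [hσ] at hch
    by_cases hE : (fun a => σ a ∪ ⋃ p ∈ IT, p.2 a) = σ
    · have hnc : ¬ (∃ p ∈ ID, ∃ q ∈ p.2, ¬ q.2 ⊆ σ q.1) := by
        rw [hch]; exact not_not_intro hE
      simp only [if_pos hE, if_neg hnc]
      refine Prod.ext ?_ (Prod.ext ?_ rfl)
      · ext ⟨c', s⟩
        simp only [Set.mem_union, Set.mem_setOf_eq, hF]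
      · ext c'
        simp only [Set.mem_setOf_eq, hF]
    · have hc' : (∃ p ∈ ID, ∃ q ∈ p.2, ¬ q.2 ⊆ σ q.1) := hch.mpr hE
      simp only [if_neg hE, if_pos hc']
      refine Prod.ext ?_ (Prod.ext ?_ rfl)
      · ext ⟨c', s⟩
        simp only [Set.mem_union, Set.mem_setOf_eq, hF]
      · ext c'
        simp only [Set.mem_setOf_eq, hF]
  intro n
  rw [key]
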